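/- arXiv:2008.02857 — 2 statements merged into one kernel-verified Lean document; each statement's English description precedes it below -/
import Mathlib

section
/- If 𝒵 is a finite set of fuzzy ∅-bisimulations between fuzzy interpretations I and I', then the pointwise supremum sup 𝒵, defined by (sup 𝒵)(x,x') = sup { Z(x,x') : Z ∈ 𝒵 }, is also a fuzzy ∅-bisimulation between I and I'. -/
open unitInterval
open scoped Classical

instance : Fact ((0:ℝ) ≤ 1) := ⟨zero_le_one⟩

/-- The Gödel implication on the unit interval. -/
noncomputable def gimp (p q : I) : I := if p ≤ q then 1 else q

/-- The Gödel biimplication on the unit interval. -/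
noncomputable def giff (p q : I) : I := min (gimp p q) (gimp q p)

/-- `Z` is a fuzzy ∅-bisimulation between the fuzzy interpretation with domain `Δ`,
concept-name interpretation `A` and role-name interpretation `r`, and the fuzzy
interpretation with domain `Δ'`, interpretations `A'` and `r'`. -/
def IsFuzzyBisim {CN RN Δ Δ' : Type*}
    (A : CN → Δ → I) (r : RN → Δ → Δ → I)
    (A' : CN → Δ' → I) (r' : RN → Δ' → Δ' → I)
    (Z : Δ → Δ' → I) : Prop :=
  (∀ x x' (a : CN), Z x x' ≤ giff (A a x) (A' a x')) ∧
  (∀ x x' (ρ : RN) (y : Δ), ∃ y' : Δ',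
      min (Z x x') (r ρ x y) ≤ min (Z y y') (r' ρ x' y')) ∧
  (∀ x x' (ρ : RN) (y' : Δ'), ∃ y : Δ,
      min (Z x x') (r' ρ x' y') ≤ min (Z y y') (r ρ x y))

theorem sup_finite_isFuzzyBisim {CN RN Δ Δ' : Type*} [Nonempty Δ] [Nonempty Δ']
    (A : CN → Δ → I) (r : RN → Δ → Δ → I)
    (A' : CN → Δ' → I) (r' : RN → Δ' → Δ' → I)
    (𝒵 : Set (Δ → Δ' → I)) (hfin : 𝒵.Finite)
    (h : ∀ Z ∈ 𝒵, IsFuzzyBisim A r A' r' Z) :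
    IsFuzzyBisim A r A' r' (fun x x' => ⨆ Z ∈ 𝒵, Z x x') := by
  rcases 𝒵.eq_empty_or_nonempty with hE | hne
  · subst hE
    refine ⟨?_, ?_, ?_⟩
    · intro x x' a; simp
    · intro x x' ρ y
      refine ⟨Classical.arbitrary _, ?_⟩
      simp
    · intro x x' ρ y'
      refine ⟨Classical.arbitrary _, ?_⟩
      simp
  · have key : ∀ x x', ∃ Z₀ ∈ 𝒵, (⨆ Z ∈ 𝒵, Z x x') = Z₀ x x' := by
      intro x x'
      have h1 : sSup ((fun Z : Δ → Δ' → I => Z x x') '' 𝒵) ∈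
          ((fun Z : Δ → Δ' → I => Z x x') '' 𝒵) :=
        Set.Nonempty.csSup_mem (hne.image _) (hfin.image _)
      rcases h1 with ⟨Z₀, hZ₀, hval⟩
      refine ⟨Z₀, hZ₀, ?_⟩
      rw [← sSup_image]; exact hval.symm
    refine ⟨?_, ?_, ?_⟩
    · intro x x' a
      exact iSup₂_le fun Z hZ => (h Z hZ).1 x x' a
    · intro x x' ρ y
      obtain ⟨Z₀, hZ₀, hval⟩ := key x x'
      obtain ⟨y', hy'⟩ := (h Z₀ hZ₀).2.1 x x' ρ y
      refine ⟨y', ?_⟩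
      simp only [hval]
      refine hy'.trans (min_le_min ?_ le_rfl)
      exact le_iSup₂_of_le Z₀ hZ₀ le_rfl
    · intro x x' ρ y'
      obtain ⟨Z₀, hZ₀, hval⟩ := key x x'
      obtain ⟨y, hy⟩ := (h Z₀ hZ₀).2.2 x x' ρ y'
      refine ⟨y, ?_⟩
      simp only [hval]
      refine hy.trans (min_le_min ?_ le_rfl)
      exact le_iSup₂_of_le Z₀ hZ₀ le_rfl
end

section
/- If 𝒵 is an arbitrary (possibly infinite) set of crisp ∅-bisimulations between fuzzy interpretations I and I' (fuzzy ∅-bisimulations whose range is contained in {0,1}), then sup 𝒵 is also a crisp ∅-bisimulation between I and I'. -/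
open unitInterval
open scoped Classical

theorem sup_crisp_isFuzzyBisim {CN RN Δ Δ' : Type*} [Nonempty Δ] [Nonempty Δ']
    (A : CN → Δ → I) (r : RN → Δ → Δ → I)
    (A' : CN → Δ' → I) (r' : RN → Δ' → Δ' → I)
    (𝒵 : Set (Δ → Δ' → I))
    (hcrisp : ∀ Z ∈ 𝒵, ∀ x x', Z x x' = 0 ∨ Z x x' = 1)
    (h : ∀ Z ∈ 𝒵, IsFuzzyBisim A r A' r' Z) :
    (∀ x x', (⨆ Z ∈ 𝒵, Z x x') = 0 ∨ (⨆ Z ∈ 𝒵, Z x x') = 1) ∧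
    IsFuzzyBisim A r A' r' (fun x x' => ⨆ Z ∈ 𝒵, Z x x') := by
  have key : ∀ x x', (⨆ Z ∈ 𝒵, Z x x') = 0 ∨
      ∃ Z ∈ 𝒵, Z x x' = 1 ∧ (⨆ Z ∈ 𝒵, Z x x') = 1 := by
    intro x x'
    by_cases hex : ∃ Z ∈ 𝒵, Z x x' = 1
    · right
      obtain ⟨Z, hZ, h1⟩ := hex
      refine ⟨Z, hZ, h1, le_antisymm (iSup_le fun W => iSup_le fun _ => le_one') ?_⟩
      calc (1:I) = Z x x' := h1.symm
        _ ≤ _ := le_iSup₂ (f := fun (W : Δ → Δ' → I) (_ : W ∈ 𝒵) => W x x') Z hZ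
    · left
      refine le_antisymm ?_ nonneg'
      refine iSup_le fun W => iSup_le fun hW => ?_
      rcases hcrisp W hW x x' with h0 | h1
      · exact h0.le
      · exact absurd ⟨W, hW, h1⟩ hex
  have hle : ∀ (W : Δ → Δ' → I), W ∈ 𝒵 → ∀ y y', W y y' ≤ ⨆ Z ∈ 𝒵, Z y y' :=
    fun W hW y y' => le_iSup₂ (f := fun (W : Δ → Δ' → I) (_ : W ∈ 𝒵) => W y y') W hW
  refine ⟨fun x x' => (key x x').imp id (fun ⟨Z, _, _, hs⟩ => hs), ?_, ?_, ?_⟩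
  · intro x x' a
    rcases key x x' with h0 | ⟨Z, hZ, h1, hs⟩
    · simp only [h0]; exact nonneg'
    · simp only [hs]
      have := (h Z hZ).1 x x' a
      rwa [h1] at this
  · intro x x' ρ y
    rcases key x x' with h0 | ⟨Z, hZ, h1, hs⟩
    · exact ⟨Classical.arbitrary Δ', by
        simp only [h0]
        exact le_trans (min_le_left _ _) (le_min nonneg' nonneg')⟩
    · obtain ⟨y', hy'⟩ := (h Z hZ).2.1 x x' ρ y
      refine ⟨y', ?_⟩
      simp only [hs]
      rw [h1] at hy'
      exact hy'.trans (min_le_min (hle Z hZ y y') le_rfl)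
  · intro x x' ρ y'
    rcases key x x' with h0 | ⟨Z, hZ, h1, hs⟩
    · exact ⟨Classical.arbitrary Δ, by
        simp only [h0]
        exact le_trans (min_le_left _ _) (le_min nonneg' nonneg')⟩
    · obtain ⟨y, hy⟩ := (h Z hZ).2.2 x x' ρ y'
      refine ⟨y, ?_⟩
      simp only [hs]
      rw [h1] at hy
      exact hy.trans (min_le_min (hle Z hZ y y') le_rfl)
end
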